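/- Let A ∈ ℝ^{n×n}, 1 ≤ s < d(A), and consider the ACI(s) with unit initial vector v₀ satisfying d(A,v₀) ≥ s+1. If v_* is a limit point of the sequence {v_k}, then v_* is a fixed point of the composite map T_{Aᵀ} ∘ T_A, i.e., v_* = T_{Aᵀ}(T_A(v_*)); moreover ‖v_*‖ = 1 and d(A,v_*) ≥ s+1. -/

import Mathlib

open Polynomial Filter Topology Matrix

noncomputable section

def mulv {ι : Type*} [Fintype ι] (A : Matrix ι ι ℝ) (v : EuclideanSpace ℝ ι) :
    EuclideanSpace ℝ ι :=
  (WithLp.equiv 2 (ι → ℝ)).symm (A.mulVec ((WithLp.equiv 2 (ι → ℝ)) v))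

def Krylov {ι : Type*} [Fintype ι] [DecidableEq ι] (A : Matrix ι ι ℝ) (s : ℕ) (v : EuclideanSpace ℝ ι) :
    Submodule ℝ (EuclideanSpace ℝ ι) :=
  Submodule.span ℝ (Set.range fun i : Fin s => mulv (A ^ (i : ℕ)) v)

def IsArnoldiProj {ι : Type*} [Fintype ι] [DecidableEq ι] (A : Matrix ι ι ℝ) (s : ℕ)
    (v w : EuclideanSpace ℝ ι) : Prop :=
  w - mulv (A ^ s) v ∈ Krylov A s v ∧ ∀ u ∈ Krylov A s v, inner ℝ w u = (0 : ℝ)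

def vgrade {ι : Type*} [Fintype ι] [DecidableEq ι] (A : Matrix ι ι ℝ)
    (v : EuclideanSpace ℝ ι) : ℕ :=
  sInf {d | ∃ p : ℝ[X], p ≠ 0 ∧ p.natDegree = d ∧ mulv (aeval A p) v = 0}

def dmin {ι : Type*} [Fintype ι] [DecidableEq ι] (A : Matrix ι ι ℝ) : ℕ :=
  (minpoly ℝ A).natDegree

def Phi {ι : Type*} [Fintype ι] [DecidableEq ι] (A : Matrix ι ι ℝ) (s : ℕ) : ℝ :=
  sSup {r | ∃ v : EuclideanSpace ℝ ι, ‖v‖ = 1 ∧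
    r = sInf {t | ∃ q : ℝ[X], q.Monic ∧ q.natDegree = s ∧ t = ‖mulv (aeval A q) v‖}}

def opNorm {ι : Type*} [Fintype ι] [DecidableEq ι] (A : Matrix ι ι ℝ) : ℝ :=
  ‖Matrix.toEuclideanCLM (𝕜 := ℝ) A‖

def ACI {ι : Type*} [Fintype ι] [DecidableEq ι] (A : Matrix ι ι ℝ) (s : ℕ)
    (v wt w vt : ℕ → EuclideanSpace ℝ ι) : Prop :=
  (∀ k, IsArnoldiProj A s (v k) (wt k)) ∧
  (∀ k, w k = ‖wt k‖⁻¹ • wt k) ∧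
  (∀ k, IsArnoldiProj Aᵀ s (w k) (vt (k + 1))) ∧
  (∀ k, v (k + 1) = ‖vt (k + 1)‖⁻¹ • vt (k + 1))

def aproj {ι : Type*} [Fintype ι] [DecidableEq ι] (A : Matrix ι ι ℝ) (s : ℕ)
    (v : EuclideanSpace ℝ ι) : EuclideanSpace ℝ ι :=
  mulv (A ^ s) v - (Submodule.orthogonalProjectionOnto (Krylov A s v) (mulv (A ^ s) v) : EuclideanSpace ℝ ι)

def TA {ι : Type*} [Fintype ι] [DecidableEq ι] (A : Matrix ι ι ℝ) (s : ℕ)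
    (v : EuclideanSpace ℝ ι) : EuclideanSpace ℝ ι :=
  ‖aproj A s v‖⁻¹ • aproj A s v

variable {ι : Type*} [Fintype ι] [DecidableEq ι]

lemma mulv_add (A : Matrix ι ι ℝ) (x y : EuclideanSpace ℝ ι) :
    mulv A (x + y) = mulv A x + mulv A y := by
  simp [mulv, Matrix.mulVec_add]

lemma mulv_smul (A : Matrix ι ι ℝ) (c : ℝ) (x : EuclideanSpace ℝ ι) :
    mulv A (c • x) = c • mulv A x := by
  simp [mulv, Matrix.mulVec_smul]

lemma mulv_add_mat (A B : Matrix ι ι ℝ) (x : EuclideanSpace ℝ ι) :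
    mulv (A + B) x = mulv A x + mulv B x := by
  simp [mulv, Matrix.add_mulVec]

lemma mulv_smul_mat (c : ℝ) (A : Matrix ι ι ℝ) (x : EuclideanSpace ℝ ι) :
    mulv (c • A) x = c • mulv A x := by
  simp [mulv, Matrix.smul_mulVec]

lemma mulv_mul (A B : Matrix ι ι ℝ) (x : EuclideanSpace ℝ ι) :
    mulv (A * B) x = mulv A (mulv B x) := by
  simp [mulv, Matrix.mulVec_mulVec]

lemma mulv_one (x : EuclideanSpace ℝ ι) : mulv 1 x = x := by
  simp [mulv]

lemma mulv_zero_mat (x : EuclideanSpace ℝ ι) : mulv (0 : Matrix ι ι ℝ) x = 0 := by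
  simp [mulv]

/-- The linear map version of `mulv`. -/
def mulvL (A : Matrix ι ι ℝ) : EuclideanSpace ℝ ι →ₗ[ℝ] EuclideanSpace ℝ ι where
  toFun := mulv A
  map_add' := mulv_add A
  map_smul' := mulv_smul A

lemma continuous_mulv (A : Matrix ι ι ℝ) : Continuous (mulv A) :=
  (mulvL A).continuous_of_finiteDimensional

lemma inner_mulv (A : Matrix ι ι ℝ) (x y : EuclideanSpace ℝ ι) :
    inner ℝ (mulv A x) y = (inner ℝ x (mulv Aᵀ y) : ℝ) := by
  simp only [mulv, EuclideanSpace.inner_eq_star_dotProduct]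
  simp [Matrix.dotProduct_mulVec, Matrix.vecMul_transpose, dotProduct_comm]

lemma transpose_pow' (A : Matrix ι ι ℝ) (i : ℕ) : (A ^ i)ᵀ = Aᵀ ^ i := by
  simp [Matrix.transpose_pow]

lemma inner_mulv_pow (A : Matrix ι ι ℝ) (i : ℕ) (x y : EuclideanSpace ℝ ι) :
    inner ℝ (mulv (A ^ i) x) y = (inner ℝ x (mulv (Aᵀ ^ i) y) : ℝ) := by
  rw [inner_mulv, transpose_pow']

lemma mem_Krylov_iff {A : Matrix ι ι ℝ} {s : ℕ} {v u : EuclideanSpace ℝ ι} :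
    u ∈ Krylov A s v ↔ ∃ c : Fin s → ℝ, ∑ i, c i • mulv (A ^ (i : ℕ)) v = u := by
  rw [Krylov]
  exact Submodule.mem_span_range_iff_exists_fun ℝ

lemma isArnoldiProj_aproj (A : Matrix ι ι ℝ) (s : ℕ) (v : EuclideanSpace ℝ ι) :
    IsArnoldiProj A s v (aproj A s v) := by
  constructor
  · rw [aproj]
    have := (Submodule.orthogonalProjectionOnto (Krylov A s v) (mulv (A ^ s) v)).2
    simpa using Submodule.neg_mem _ this
  · intro u hu
    have h := Submodule.sub_starProjection_mem_orthogonal (K := Krylov A s v) (mulv (A ^ s) v)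
    rw [real_inner_comm]
    exact h u hu

lemma isArnoldiProj_unique {A : Matrix ι ι ℝ} {s : ℕ} {v w1 w2 : EuclideanSpace ℝ ι}
    (h1 : IsArnoldiProj A s v w1) (h2 : IsArnoldiProj A s v w2) : w1 = w2 := by
  have hmem : w1 - w2 ∈ Krylov A s v := by
    have := Submodule.sub_mem _ h1.1 h2.1
    simpa using this
  have : inner ℝ (w1 - w2) (w1 - w2) = (0 : ℝ) := by
    rw [inner_sub_left]
    rw [h1.2 _ hmem, h2.2 _ hmem]; ring
  have := inner_self_eq_zero.mp this
  exact sub_eq_zero.mp this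

def mulvM (x : EuclideanSpace ℝ ι) : Matrix ι ι ℝ →ₗ[ℝ] EuclideanSpace ℝ ι where
  toFun A := mulv A x
  map_add' A B := mulv_add_mat A B x
  map_smul' c A := mulv_smul_mat c A x

lemma mulv_sum_mat {α : Type*} (t : Finset α) (M : α → Matrix ι ι ℝ) (x : EuclideanSpace ℝ ι) :
    mulv (∑ i ∈ t, M i) x = ∑ i ∈ t, mulv (M i) x :=
  map_sum (mulvM x) M t

lemma mulv_sub_mat (A B : Matrix ι ι ℝ) (x : EuclideanSpace ℝ ι) :
    mulv (A - B) x = mulv A x - mulv B x :=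
  map_sub (mulvM x) A B

lemma mulv_aeval_eq_sum {A : Matrix ι ι ℝ} {s : ℕ} {r : ℝ[X]} (hr : r.natDegree < s)
    (x : EuclideanSpace ℝ ι) :
    mulv (aeval A r) x = ∑ i : Fin s, r.coeff (i : ℕ) • mulv (A ^ (i : ℕ)) x := by
  rw [Polynomial.aeval_eq_sum_range' hr, mulv_sum_mat, Fin.sum_univ_eq_sum_range
    (fun i => r.coeff i • mulv (A ^ i) x)]
  exact Finset.sum_congr rfl fun i _ => mulv_smul_mat _ _ _

/-- The monic polynomial `X^s - ∑ c i X^i`. -/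
def polyOf (s : ℕ) (c : Fin s → ℝ) : ℝ[X] := X ^ s - ∑ i : Fin s, C (c i) * X ^ (i : ℕ)

lemma polyOf_natDegree_lt (s : ℕ) (hs : 1 ≤ s) (c : Fin s → ℝ) :
    (∑ i : Fin s, C (c i) * X ^ (i : ℕ) : ℝ[X]).natDegree < s := by
  have : (∑ i : Fin s, C (c i) * X ^ (i : ℕ) : ℝ[X]).natDegree ≤ s - 1 := by
    apply Polynomial.natDegree_sum_le_of_forall_le
    intro i _
    refine le_trans (Polynomial.natDegree_C_mul_le _ _) ?_
    simpa using Nat.le_sub_one_of_lt i.2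
  omega

lemma polyOf_natDegree (s : ℕ) (hs : 1 ≤ s) (c : Fin s → ℝ) : (polyOf s c).natDegree = s := by
  rw [polyOf, Polynomial.natDegree_sub_eq_left_of_natDegree_lt, Polynomial.natDegree_X_pow]
  rw [Polynomial.natDegree_X_pow]
  exact polyOf_natDegree_lt s hs c

lemma polyOf_ne_zero (s : ℕ) (hs : 1 ≤ s) (c : Fin s → ℝ) : polyOf s c ≠ 0 := by
  intro h
  have h1 : (polyOf s c).coeff s = 0 := by rw [h]; simp
  have h2 : (polyOf s c).coeff s = 1 := by
    rw [polyOf, Polynomial.coeff_sub, Polynomial.coeff_X_pow]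
    have : (∑ i : Fin s, C (c i) * X ^ (i : ℕ) : ℝ[X]).coeff s = 0 :=
      Polynomial.coeff_eq_zero_of_natDegree_lt (polyOf_natDegree_lt s hs c)
    simp [this]
  rw [h1] at h2; norm_num at h2

lemma mulv_polyOf (A : Matrix ι ι ℝ) (s : ℕ) (hs : 1 ≤ s) (c : Fin s → ℝ)
    (x : EuclideanSpace ℝ ι) :
    mulv (aeval A (polyOf s c)) x = mulv (A ^ s) x - ∑ i : Fin s, c i • mulv (A ^ (i : ℕ)) x := by
  rw [polyOf, map_sub, mulv_sub_mat, map_pow, aeval_X]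
  congr 1
  rw [map_sum, mulv_sum_mat]
  refine Finset.sum_congr rfl fun i _ => ?_
  rw [_root_.map_mul, aeval_C, map_pow, aeval_X]
  simp [Matrix.smul_mulVec, mulv_smul_mat, Algebra.algebraMap_eq_smul_one,
    Matrix.smul_mul, Matrix.one_mul]

/-- `x` has grade at least `s+1` w.r.t. `A`. -/
def Good (A : Matrix ι ι ℝ) (s : ℕ) (x : EuclideanSpace ℝ ι) : Prop :=
  ∀ p : ℝ[X], p ≠ 0 → p.natDegree ≤ s → mulv (aeval A p) x ≠ 0

lemma mulv_zero (A : Matrix ι ι ℝ) : mulv A (0 : EuclideanSpace ℝ ι) = 0 :=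
  map_zero (mulvL A)

lemma lb_of_good {A : Matrix ι ι ℝ} {s : ℕ} {x : EuclideanSpace ℝ ι} (hs : 1 ≤ s)
    (h : Good A s x) (c : Fin s → ℝ) :
    mulv (A ^ s) x - ∑ i : Fin s, c i • mulv (A ^ (i : ℕ)) x ≠ 0 := by
  rw [← mulv_polyOf A s hs c x]
  exact h _ (polyOf_ne_zero s hs c) (le_of_eq (polyOf_natDegree s hs c))

lemma good_of_lb {A : Matrix ι ι ℝ} {s : ℕ} {x : EuclideanSpace ℝ ι} (hs : 1 ≤ s)
    (hb : ∀ c : Fin s → ℝ, mulv (A ^ s) x - ∑ i : Fin s, c i • mulv (A ^ (i : ℕ)) x ≠ 0) :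
    Good A s x := by
  intro p hp hpd hpx
  set d := p.natDegree with hd
  set q : ℝ[X] := C p.leadingCoeff⁻¹ * (X ^ (s - d) * p) with hq
  have hlc : p.leadingCoeff ≠ 0 := Polynomial.leadingCoeff_ne_zero.mpr hp
  have hqne : q ≠ 0 := by
    apply mul_ne_zero (by simp [hlc]) (mul_ne_zero ((pow_ne_zero _ Polynomial.X_ne_zero)) hp)
  have hqdeg : q.natDegree = s := by
    rw [hq, Polynomial.natDegree_C_mul (by simp [hlc]), Polynomial.natDegree_mul
      (pow_ne_zero _ Polynomial.X_ne_zero) hp, Polynomial.natDegree_X_pow]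
    omega
  have hqx : mulv (aeval A q) x = 0 := by
    rw [hq, _root_.map_mul, _root_.map_mul, aeval_C, map_pow, aeval_X]
    rw [Algebra.algebraMap_eq_smul_one, Matrix.smul_mul, Matrix.one_mul, mulv_smul_mat,
      mulv_mul, hpx, mulv_zero, smul_zero]
  have hql : q.coeff s = 1 := by
    have : q.coeff s = q.leadingCoeff := by rw [Polynomial.leadingCoeff, hqdeg]
    rw [this, hq]
    rw [Polynomial.leadingCoeff_mul, Polynomial.leadingCoeff_mul]
    simp [Polynomial.leadingCoeff_X_pow, inv_mul_cancel₀ hlc]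
  set r : ℝ[X] := X ^ s - q with hr
  have hrd : r.natDegree < s := by
    rcases eq_or_ne r 0 with h0 | h0
    · rw [h0]; simpa using (show 0 < s by omega)
    · have hle : r.natDegree ≤ s := by
        refine le_trans (Polynomial.natDegree_sub_le _ _) ?_
        simp [Polynomial.natDegree_X_pow, hqdeg]
      rcases lt_or_eq_of_le hle with h | h
      · exact h
      · exfalso
        have : r.coeff s ≠ 0 := by
          rw [← h]
          exact Polynomial.leadingCoeff_ne_zero.mpr h0
        apply this
        rw [hr, Polynomial.coeff_sub, Polynomial.coeff_X_pow, hql]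
        simp
  have hrx : mulv (aeval A r) x = mulv (A ^ s) x := by
    rw [hr, map_sub, mulv_sub_mat, map_pow, aeval_X, hqx, sub_zero]
  have := hb (fun i => r.coeff (i : ℕ))
  apply this
  rw [← mulv_aeval_eq_sum hrd, hrx, sub_self]

lemma good_of_grade {A : Matrix ι ι ℝ} {s : ℕ} {x : EuclideanSpace ℝ ι}
    (h : s + 1 ≤ vgrade A x) : Good A s x := by
  intro p hp hpd hpx
  have : p.natDegree ∈ {d | ∃ p : ℝ[X], p ≠ 0 ∧ p.natDegree = d ∧ mulv (aeval A p) x = 0} :=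
    ⟨p, hp, rfl, hpx⟩
  have := Nat.sInf_le this
  rw [vgrade] at h
  omega

lemma grade_of_good {A : Matrix ι ι ℝ} {s : ℕ} {x : EuclideanSpace ℝ ι}
    (h : Good A s x) : s + 1 ≤ vgrade A x := by
  have hne : {d | ∃ p : ℝ[X], p ≠ 0 ∧ p.natDegree = d ∧ mulv (aeval A p) x = 0}.Nonempty := by
    refine ⟨(minpoly ℝ A).natDegree, minpoly ℝ A, ?_, rfl, ?_⟩
    · exact minpoly.ne_zero (Algebra.IsIntegral.isIntegral A)
    · rw [minpoly.aeval, mulv_zero_mat]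
  have hmem := Nat.sInf_mem hne
  obtain ⟨p, hp, hpd, hpx⟩ := hmem
  rw [vgrade]
  by_contra hc
  push_neg at hc
  exact h p hp (by omega) hpx

lemma isArnoldiProj_ne_zero {A : Matrix ι ι ℝ} {s : ℕ} {x w' : EuclideanSpace ℝ ι}
    (hs : 1 ≤ s) (hx : Good A s x) (h : IsArnoldiProj A s x w') : w' ≠ 0 := by
  intro h0
  have h1 := h.1
  rw [h0, zero_sub] at h1
  have h2 : mulv (A ^ s) x ∈ Krylov A s x := by simpa using Submodule.neg_mem _ h1
  obtain ⟨c, hc⟩ := mem_Krylov_iff.mp h2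
  exact lb_of_good hs hx c (by rw [hc, sub_self])

lemma cross_orth {A : Matrix ι ι ℝ} {s : ℕ} {x w : EuclideanSpace ℝ ι}
    (hw : ∀ u ∈ Krylov A s x, inner ℝ w u = (0 : ℝ)) :
    ∀ u ∈ Krylov Aᵀ s w, inner ℝ u x = (0 : ℝ) := by
  intro u hu
  induction hu using Submodule.span_induction with
  | mem y hy =>
    obtain ⟨i, rfl⟩ := hy
    rw [inner_mulv_pow, Matrix.transpose_transpose]
    exact hw _ (Submodule.subset_span ⟨i, rfl⟩)
  | zero => simp
  | add y z _ _ hy hz => rw [inner_add_left, hy, hz]; ring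
  | smul c y _ hy => rw [inner_smul_left, hy]; simp

lemma inner_arnoldi_self {A : Matrix ι ι ℝ} {s : ℕ} {x w' : EuclideanSpace ℝ ι}
    (h : IsArnoldiProj A s x w') :
    inner ℝ w' (mulv (A ^ s) x) = (‖w'‖ : ℝ) ^ 2 := by
  have h1 : inner ℝ w' (w' - mulv (A ^ s) x) = (0 : ℝ) := h.2 _ h.1
  have h2 : inner ℝ w' w' - inner ℝ w' (mulv (A ^ s) x) = (0 : ℝ) := by
    rw [← inner_sub_right]; exact h1
  have := real_inner_self_eq_norm_sq w'
  linarith [h2, this]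

/-- The key identity: if `w' = P_s(A;x)x`, `w = w'/‖w'‖`, and `y = P_s(Aᵀ;w)w`,
then `⟪y, x⟫ = ‖w'‖`. -/
lemma key_identity {A : Matrix ι ι ℝ} {s : ℕ} {x w' w y : EuclideanSpace ℝ ι}
    (hx : IsArnoldiProj A s x w') (hw : w = ‖w'‖⁻¹ • w')
    (hy : IsArnoldiProj Aᵀ s w y) (hne : w' ≠ 0) :
    inner ℝ y x = (‖w'‖ : ℝ) := by
  have hnorm : ‖w'‖ ≠ 0 := norm_ne_zero_iff.mpr hne
  have hworth : ∀ u ∈ Krylov A s x, inner ℝ w u = (0 : ℝ) := by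
    intro u hu
    rw [hw, inner_smul_left, hx.2 u hu]; simp
  have hsplit : y = mulv (Aᵀ ^ s) w + (y - mulv (Aᵀ ^ s) w) := by abel
  have h2 : inner ℝ (y - mulv (Aᵀ ^ s) w) x = (0 : ℝ) := cross_orth hworth _ hy.1
  have h3 : inner ℝ (mulv (Aᵀ ^ s) w) x = (inner ℝ w (mulv (A ^ s) x) : ℝ) := by
    rw [inner_mulv_pow, Matrix.transpose_transpose]
  have h4 : inner ℝ w (mulv (A ^ s) x) = (‖w'‖ : ℝ) := by
    rw [hw, inner_smul_left, inner_arnoldi_self hx, sq]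
    simp only [conj_trivial]
    field_simp
  calc inner ℝ y x = (inner ℝ (mulv (Aᵀ ^ s) w + (y - mulv (Aᵀ ^ s) w)) x : ℝ) := by rw [← hsplit]
    _ = inner ℝ (mulv (Aᵀ ^ s) w) x + inner ℝ (y - mulv (Aᵀ ^ s) w) x := inner_add_left _ _ _
    _ = ‖w'‖ := by rw [h2, h3, h4, add_zero]

/-- Minimality: `‖w'‖ ≤ ‖A^s x - ∑ cᵢ Aⁱ x‖` for all coefficients `c`. -/
lemma arnoldi_min {A : Matrix ι ι ℝ} {s : ℕ} {x w' : EuclideanSpace ℝ ι}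
    (h : IsArnoldiProj A s x w') (c : Fin s → ℝ) :
    ‖w'‖ ≤ ‖mulv (A ^ s) x - ∑ i : Fin s, c i • mulv (A ^ (i : ℕ)) x‖ := by
  set u : EuclideanSpace ℝ ι := ∑ i : Fin s, c i • mulv (A ^ (i : ℕ)) x with hu
  have hum : u ∈ Krylov A s x := by
    rw [mem_Krylov_iff]; exact ⟨c, rfl⟩
  have hd : mulv (A ^ s) x - u = w' + ((mulv (A ^ s) x - w') - u) := by abel
  have hdm : (mulv (A ^ s) x - w') - u ∈ Krylov A s x := by
    refine Submodule.sub_mem _ ?_ hum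
    have := Submodule.neg_mem _ h.1
    simpa using this
  have horth : inner ℝ w' ((mulv (A ^ s) x - w') - u) = (0 : ℝ) := h.2 _ hdm
  have hsq : ‖mulv (A ^ s) x - u‖ ^ 2 = ‖w'‖ ^ 2 + ‖(mulv (A ^ s) x - w') - u‖ ^ 2 := by
    rw [hd, norm_add_sq_real, horth]; ring
  have h1 : ‖w'‖ ^ 2 ≤ ‖mulv (A ^ s) x - u‖ ^ 2 := by nlinarith [sq_nonneg ‖(mulv (A ^ s) x - w') - u‖]
  nlinarith [h1, norm_nonneg w', norm_nonneg (mulv (A ^ s) x - u)]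

def gram (B : Matrix ι ι ℝ) (s : ℕ) (v : EuclideanSpace ℝ ι) : Matrix (Fin s) (Fin s) ℝ :=
  Matrix.of fun i j => (inner ℝ (mulv (B ^ (i : ℕ)) v) (mulv (B ^ (j : ℕ)) v) : ℝ)

def gbeta (B : Matrix ι ι ℝ) (s : ℕ) (v : EuclideanSpace ℝ ι) : Fin s → ℝ :=
  fun i => (inner ℝ (mulv (B ^ (i : ℕ)) v) (mulv (B ^ s) v) : ℝ)

def gcoef (B : Matrix ι ι ℝ) (s : ℕ) (v : EuclideanSpace ℝ ι) : Fin s → ℝ :=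
  ((gram B s v).det)⁻¹ • ((gram B s v).adjugate.mulVec (gbeta B s v))

def gproj (B : Matrix ι ι ℝ) (s : ℕ) (v : EuclideanSpace ℝ ι) : EuclideanSpace ℝ ι :=
  mulv (B ^ s) v - ∑ i : Fin s, gcoef B s v i • mulv (B ^ (i : ℕ)) v

lemma gram_symm (B : Matrix ι ι ℝ) (s : ℕ) (v : EuclideanSpace ℝ ι) (i j : Fin s) :
    gram B s v i j = gram B s v j i := by
  simp only [_root_.gram, Matrix.of_apply]
  exact real_inner_comm _ _

lemma gram_mulVec_gcoef {B : Matrix ι ι ℝ} {s : ℕ} {v : EuclideanSpace ℝ ι}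
    (hdet : (gram B s v).det ≠ 0) :
    (gram B s v).mulVec (gcoef B s v) = gbeta B s v := by
  rw [gcoef, Matrix.mulVec_smul, Matrix.mulVec_mulVec, Matrix.mul_adjugate]
  rw [Matrix.smul_mulVec, Matrix.one_mulVec]
  rw [smul_smul, inv_mul_cancel₀ hdet, one_smul]

lemma isArnoldiProj_gproj {B : Matrix ι ι ℝ} {s : ℕ} {v : EuclideanSpace ℝ ι}
    (hdet : (gram B s v).det ≠ 0) :
    IsArnoldiProj B s v (gproj B s v) := by
  constructor
  · rw [gproj, sub_sub_cancel_left]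
    apply Submodule.neg_mem
    apply Submodule.sum_mem
    intro i _
    exact Submodule.smul_mem _ _ (Submodule.subset_span ⟨i, rfl⟩)
  · intro u hu
    induction hu using Submodule.span_induction with
    | mem y hy =>
      obtain ⟨j, rfl⟩ := hy
      rw [gproj, inner_sub_left, sum_inner]
      have h1 : ∀ i : Fin s, (inner ℝ (gcoef B s v i • mulv (B ^ (i : ℕ)) v)
          (mulv (B ^ (j : ℕ)) v) : ℝ) = gcoef B s v i * gram B s v i j := by
        intro i; rw [real_inner_smul_left]; rfl
      rw [Finset.sum_congr rfl fun i _ => h1 i]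
      have h2 : ∑ i : Fin s, gcoef B s v i * gram B s v i j
          = (gram B s v).mulVec (gcoef B s v) j := by
        rw [Matrix.mulVec, dotProduct]
        exact Finset.sum_congr rfl fun i _ => by rw [gram_symm]; ring
      rw [h2, gram_mulVec_gcoef hdet]
      have h3 : (inner ℝ (mulv (B ^ s) v) (mulv (B ^ (j : ℕ)) v) : ℝ) = gbeta B s v j :=
        real_inner_comm _ _
      rw [h3, sub_self]
    | zero => simp
    | add y z _ _ hy hz => rw [inner_add_right, hy, hz]; ring
    | smul c y _ hy => rw [real_inner_smul_right, hy]; simp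

lemma aproj_eq_gproj {B : Matrix ι ι ℝ} {s : ℕ} {v : EuclideanSpace ℝ ι}
    (hdet : (gram B s v).det ≠ 0) : aproj B s v = gproj B s v :=
  isArnoldiProj_unique (isArnoldiProj_aproj B s v) (isArnoldiProj_gproj hdet)

lemma gram_det_ne_zero {B : Matrix ι ι ℝ} {s : ℕ} {v : EuclideanSpace ℝ ι}
    (hs : 1 ≤ s) (hv : Good B s v) : (gram B s v).det ≠ 0 := by
  intro hdet
  obtain ⟨c, hc0, hc⟩ := (Matrix.exists_mulVec_eq_zero_iff).mpr hdet
  have hsum : (∑ i : Fin s, c i • mulv (B ^ (i : ℕ)) v) = 0 := by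
    have hq : (c ⬝ᵥ (gram B s v).mulVec c) = 0 := by rw [hc, dotProduct_zero]
    have hexp : (c ⬝ᵥ (gram B s v).mulVec c)
        = (inner ℝ (∑ i : Fin s, c i • mulv (B ^ (i : ℕ)) v)
            (∑ j : Fin s, c j • mulv (B ^ (j : ℕ)) v) : ℝ) := by
      simp only [dotProduct, Matrix.mulVec, sum_inner, inner_sum,
        real_inner_smul_left, real_inner_smul_right, _root_.gram, Matrix.of_apply, Finset.mul_sum]
      refine Finset.sum_congr rfl fun i _ => Finset.sum_congr rfl fun j _ => by
        rw [real_inner_comm]; ring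
    rw [hexp] at hq
    exact inner_self_eq_zero.mp hq
  set p : ℝ[X] := ∑ i : Fin s, C (c i) * X ^ (i : ℕ) with hp
  have hcoeff : ∀ j : Fin s, p.coeff (j : ℕ) = c j := by
    intro j
    rw [hp, Polynomial.finset_sum_coeff]
    rw [Finset.sum_congr rfl fun i _ => by
      rw [Polynomial.coeff_C_mul, Polynomial.coeff_X_pow]]
    rw [Finset.sum_eq_single j]
    · simp
    · intro i _ hij
      have : ¬((j : ℕ) = (i : ℕ)) := fun h => hij (Fin.ext h.symm)
      simp [this]
    · simp
  have hpne : p ≠ 0 := by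
    obtain ⟨j, hj⟩ := Function.ne_iff.mp hc0
    intro h0
    apply hj
    rw [← hcoeff j, h0]; simp
  have hpd : p.natDegree < s := polyOf_natDegree_lt s hs c
  apply hv p hpne (le_of_lt hpd)
  rw [mulv_aeval_eq_sum hpd]
  rw [← hsum]
  exact Finset.sum_congr rfl fun i _ => by rw [hcoeff]

lemma continuous_gram (B : Matrix ι ι ℝ) (s : ℕ) : Continuous (fun v => gram B s v) := by
  apply continuous_matrix
  intro i j
  simp only [_root_.gram, Matrix.of_apply]
  exact Continuous.inner (continuous_mulv _) (continuous_mulv _)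

lemma continuous_gbeta (B : Matrix ι ι ℝ) (s : ℕ) (i : Fin s) :
    Continuous (fun v => gbeta B s v i) :=
  Continuous.inner (continuous_mulv _) (continuous_mulv _)

lemma continuous_gram_det (B : Matrix ι ι ℝ) (s : ℕ) :
    Continuous (fun v => (gram B s v).det) :=
  (continuous_gram B s).matrix_det

lemma continuousAt_gproj {B : Matrix ι ι ℝ} {s : ℕ} {v0 : EuclideanSpace ℝ ι}
    (hdet : (gram B s v0).det ≠ 0) : ContinuousAt (gproj B s) v0 := by
  have hadj : Continuous (fun v => (gram B s v).adjugate) := (continuous_gram B s).matrix_adjugate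
  have hmv : ∀ i : Fin s, Continuous (fun v => (gram B s v).adjugate.mulVec (gbeta B s v) i) := by
    intro i
    simp only [Matrix.mulVec, dotProduct]
    apply continuous_finset_sum
    intro j _
    exact (hadj.matrix_elem i j).mul (continuous_gbeta B s j)
  have hinv : ContinuousAt (fun v => ((gram B s v).det)⁻¹) v0 :=
    ((continuous_gram_det B s).continuousAt).inv₀ hdet
  have hcoef : ∀ i : Fin s, ContinuousAt (fun v => gcoef B s v i) v0 := by
    intro i
    simp only [gcoef, Pi.smul_apply, smul_eq_mul]
    exact hinv.mul (hmv i).continuousAt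
  have hsum : ContinuousAt (fun v => ∑ i : Fin s, gcoef B s v i • mulv (B ^ (i : ℕ)) v) v0 := by
    apply tendsto_finset_sum
    intro i _
    exact ((hcoef i).smul (continuous_mulv _).continuousAt)
  exact ((continuous_mulv _).continuousAt).sub hsum

lemma continuousAt_aproj {B : Matrix ι ι ℝ} {s : ℕ} {v0 : EuclideanSpace ℝ ι}
    (hs : 1 ≤ s) (hv : Good B s v0) : ContinuousAt (aproj B s) v0 := by
  have hdet := gram_det_ne_zero hs hv
  have hopen : ∀ᶠ v in 𝓝 v0, (gram B s v).det ≠ 0 := by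
    have : IsOpen {v : EuclideanSpace ℝ ι | (gram B s v).det ≠ 0} :=
      isOpen_ne.preimage (continuous_gram_det B s)
    exact this.mem_nhds hdet
  have heq : aproj B s =ᶠ[𝓝 v0] gproj B s := by
    filter_upwards [hopen] with v hv'
    exact aproj_eq_gproj hv'
  exact (continuousAt_gproj hdet).congr heq.symm

lemma continuousAt_TA {B : Matrix ι ι ℝ} {s : ℕ} {v0 : EuclideanSpace ℝ ι}
    (hs : 1 ≤ s) (hv : Good B s v0) (hne : aproj B s v0 ≠ 0) :
    ContinuousAt (TA B s) v0 := by
  have h1 : ContinuousAt (aproj B s) v0 := continuousAt_aproj hs hv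
  have h2 : ContinuousAt (fun v => ‖aproj B s v‖⁻¹) v0 :=
    (h1.norm).inv₀ (norm_ne_zero_iff.mpr hne)
  exact h2.smul h1

set_option maxHeartbeats 1000000 in
theorem aci_limit_fixed_point {n : ℕ} (A : Matrix (Fin n) (Fin n) ℝ) (s : ℕ)
    (hs1 : 1 ≤ s) (hs2 : s < dmin A)
    (v wt w vt : ℕ → EuclideanSpace ℝ (Fin n))
    (hv0 : ‖v 0‖ = 1) (hg : s + 1 ≤ vgrade A (v 0))
    (haci : ACI A s v wt w vt)
    (vstar : EuclideanSpace ℝ (Fin n))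
    (hlim : ∃ φ : ℕ → ℕ, StrictMono φ ∧ Tendsto (v ∘ φ) atTop (𝓝 vstar)) :
    vstar = TA Aᵀ s (TA A s vstar) ∧ ‖vstar‖ = 1 ∧ s + 1 ≤ vgrade A vstar := by
  obtain ⟨h1, h2, h3, h4⟩ := haci
  obtain ⟨φ, hφ, hconv⟩ := hlim
  have hgood0 : Good A s (v 0) := good_of_grade hg
  -- Step 1: basic invariants along the iteration
  have H : ∀ k, wt k ≠ 0 ∧ ‖v k‖ = 1 := by
    intro k
    induction k with
    | zero => exact ⟨isArnoldiProj_ne_zero hs1 hgood0 (h1 0), hv0⟩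
    | succ k ih =>
      obtain ⟨hwt, hvk⟩ := ih
      have hkey := key_identity (h1 k) (h2 k) (h3 k) hwt
      have hσpos : 0 < ‖wt k‖ := norm_pos_iff.mpr hwt
      have hcs : (inner ℝ (vt (k+1)) (v k) : ℝ) ≤ ‖vt (k+1)‖ * ‖v k‖ := real_inner_le_norm _ _
      rw [hkey, hvk, mul_one] at hcs
      have hvtne : vt (k+1) ≠ 0 := by
        intro h0; rw [h0, norm_zero] at hcs; linarith
      have hv1 : ‖v (k+1)‖ = 1 := by
        rw [h4 k, norm_smul, norm_inv, norm_norm, inv_mul_cancel₀ (norm_ne_zero_iff.mpr hvtne)]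
      have hy : IsArnoldiProj Aᵀᵀ s (v (k+1)) (wt (k+1)) := by
        rw [Matrix.transpose_transpose]; exact h1 (k+1)
      have hkey2 := key_identity (A := Aᵀ) (h3 k) (h4 k) hy hvtne
      have hτpos : 0 < ‖vt (k+1)‖ := norm_pos_iff.mpr hvtne
      have hwt1 : wt (k+1) ≠ 0 := by
        intro h0; rw [h0] at hkey2; simp at hkey2; linarith
      exact ⟨hwt1, hv1⟩
  have hwtne : ∀ k, wt k ≠ 0 := fun k => (H k).1
  have hv1 : ∀ k, ‖v k‖ = 1 := fun k => (H k).2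
  have hσpos : ∀ k, 0 < ‖wt k‖ := fun k => norm_pos_iff.mpr (hwtne k)
  have hw1 : ∀ k, ‖w k‖ = 1 := by
    intro k
    rw [h2 k, norm_smul, norm_inv, norm_norm, inv_mul_cancel₀ (norm_ne_zero_iff.mpr (hwtne k))]
  have hkey : ∀ k, (inner ℝ (vt (k+1)) (v k) : ℝ) = ‖wt k‖ :=
    fun k => key_identity (h1 k) (h2 k) (h3 k) (hwtne k)
  have hστ : ∀ k, ‖wt k‖ ≤ ‖vt (k+1)‖ := by
    intro k
    have hcs : (inner ℝ (vt (k+1)) (v k) : ℝ) ≤ ‖vt (k+1)‖ * ‖v k‖ := real_inner_le_norm _ _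
    rw [hkey k, hv1 k, mul_one] at hcs; exact hcs
  have hvtne : ∀ k, vt (k+1) ≠ 0 := by
    intro k h0
    have := hστ k; rw [h0, norm_zero] at this; linarith [hσpos k]
  have hτpos : ∀ k, 0 < ‖vt (k+1)‖ := fun k => norm_pos_iff.mpr (hvtne k)
  have hkey2 : ∀ k, (inner ℝ (wt (k+1)) (w k) : ℝ) = ‖vt (k+1)‖ := by
    intro k
    have hy : IsArnoldiProj Aᵀᵀ s (v (k+1)) (wt (k+1)) := by
      rw [Matrix.transpose_transpose]; exact h1 (k+1)
    exact key_identity (A := Aᵀ) (h3 k) (h4 k) hy (hvtne k)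
  have hτσ : ∀ k, ‖vt (k+1)‖ ≤ ‖wt (k+1)‖ := by
    intro k
    have hcs : (inner ℝ (wt (k+1)) (w k) : ℝ) ≤ ‖wt (k+1)‖ * ‖w k‖ := real_inner_le_norm _ _
    rw [hkey2 k, hw1 k, mul_one] at hcs; exact hcs
  -- Step 2: σ is monotone and bounded, hence convergent
  set σ : ℕ → ℝ := fun k => ‖wt k‖ with hσdef
  set τ : ℕ → ℝ := fun k => ‖vt (k+1)‖ with hτdef
  have hmono : Monotone σ := monotone_nat_of_le_succ fun k => le_trans (hστ k) (hτσ k)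
  set C : ℝ := ‖LinearMap.toContinuousLinearMap (mulvL (A ^ s))‖ with hC
  have hbound : ∀ k, σ k ≤ C := by
    intro k
    have hself := inner_arnoldi_self (h1 k)
    have hcs : (inner ℝ (wt k) (mulv (A ^ s) (v k)) : ℝ) ≤ ‖wt k‖ * ‖mulv (A ^ s) (v k)‖ :=
      real_inner_le_norm _ _
    rw [hself] at hcs
    have h5 : ‖wt k‖ ≤ ‖mulv (A ^ s) (v k)‖ := by nlinarith [hσpos k]
    have h6 : ‖mulv (A ^ s) (v k)‖ ≤ C * ‖v k‖ :=
      (LinearMap.toContinuousLinearMap (mulvL (A ^ s))).le_opNorm (v k)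
    rw [hv1 k, mul_one] at h6
    exact le_trans h5 h6
  have hbdd : BddAbove (Set.range σ) := ⟨C, by rintro x ⟨k, rfl⟩; exact hbound k⟩
  set L : ℝ := ⨆ k, σ k with hL
  have hσtend : Tendsto σ atTop (𝓝 L) := tendsto_atTop_ciSup hmono hbdd
  have hLpos : 0 < L := lt_of_lt_of_le (hσpos 0) (le_ciSup hbdd 0)
  have hσstend : Tendsto (fun k => σ (k+1)) atTop (𝓝 L) :=
    hσtend.comp (tendsto_add_atTop_nat 1)
  have hτtend : Tendsto τ atTop (𝓝 L) :=
    tendsto_of_tendsto_of_tendsto_of_le_of_le hσtend hσstend hστ hτσ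
  -- Step 3: consecutive iterates get close
  have hinner : ∀ k, (inner ℝ (v (k+1)) (v k) : ℝ) = σ k / τ k := by
    intro k
    rw [h4 k, real_inner_smul_left, hkey k, div_eq_inv_mul]
  have hratio : Tendsto (fun k => σ k / τ k) atTop (𝓝 1) := by
    have := hσtend.div hτtend (ne_of_gt hLpos)
    rwa [div_self (ne_of_gt hLpos)] at this
  have hnsq : ∀ k, ‖v (k+1) - v k‖ ^ 2 = 2 - 2 * (σ k / τ k) := by
    intro k
    rw [norm_sub_sq_real, hinner k, hv1 k, hv1 (k+1)]
    ring
  have hsqtend : Tendsto (fun k => ‖v (k+1) - v k‖ ^ 2) atTop (𝓝 0) := by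
    have h0 : Tendsto (fun k => 2 - 2 * (σ k / τ k)) atTop (𝓝 (2 - 2 * 1)) :=
      (tendsto_const_nhds).sub ((tendsto_const_nhds).mul hratio)
    norm_num at h0
    exact (by simpa only [hnsq] using h0)
  have hdiff : Tendsto (fun k => v (k+1) - v k) atTop (𝓝 0) := by
    rw [tendsto_zero_iff_norm_tendsto_zero]
    have := hsqtend.sqrt
    simpa [Real.sqrt_sq (norm_nonneg _)] using this
  -- Step 4: the shifted subsequence also converges to vstar
  have hconv1 : Tendsto (fun j => v (φ j + 1)) atTop (𝓝 vstar) := by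
    have hd : Tendsto (fun j => v (φ j + 1) - v (φ j)) atTop (𝓝 0) :=
      hdiff.comp hφ.tendsto_atTop
    have := hconv.add hd
    simpa using this
  -- Step 5: vstar is a unit vector of grade ≥ s+1
  have hvstar1 : ‖vstar‖ = 1 := by
    have := (continuous_norm.tendsto vstar).comp hconv
    have h0 : Tendsto (fun j => ‖v (φ j)‖) atTop (𝓝 ‖vstar‖) := this
    have h1' : Tendsto (fun _ : ℕ => (1 : ℝ)) atTop (𝓝 ‖vstar‖) := by
      simpa only [hv1] using h0
    exact tendsto_nhds_unique h1' tendsto_const_nhds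
  have hlb : ∀ c : Fin s → ℝ,
      σ 0 ≤ ‖mulv (A ^ s) vstar - ∑ i : Fin s, c i • mulv (A ^ (i : ℕ)) vstar‖ := by
    intro c
    have hfc : Continuous fun x : EuclideanSpace ℝ (Fin n) =>
        ‖mulv (A ^ s) x - ∑ i : Fin s, c i • mulv (A ^ (i : ℕ)) x‖ := by
      apply Continuous.norm
      exact (continuous_mulv _).sub (continuous_finset_sum _ fun i _ =>
        Continuous.const_smul (continuous_mulv (A ^ (i : ℕ))) (c i))
    have htend := (hfc.tendsto vstar).comp hconv
    refine ge_of_tendsto htend (Eventually.of_forall fun j => ?_)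
    calc σ 0 ≤ σ (φ j) := hmono (Nat.zero_le _)
      _ ≤ _ := arnoldi_min (h1 (φ j)) c
  have hgoodstar : Good A s vstar := by
    apply good_of_lb hs1
    intro c h0
    have := hlb c
    rw [h0, norm_zero] at this
    linarith [hσpos 0]
  -- Step 6: identify the iteration with TA maps
  have hwt_eq : ∀ k, wt k = aproj A s (v k) :=
    fun k => isArnoldiProj_unique (h1 k) (isArnoldiProj_aproj A s (v k))
  have hw_eq : ∀ k, w k = TA A s (v k) := by
    intro k; rw [h2 k, hwt_eq k, TA]
  have hvt_eq : ∀ k, vt (k+1) = aproj Aᵀ s (w k) :=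
    fun k => isArnoldiProj_unique (h3 k) (isArnoldiProj_aproj Aᵀ s (w k))
  have hv_eq : ∀ k, v (k+1) = TA Aᵀ s (w k) := by
    intro k; rw [h4 k, hvt_eq k, TA]
  -- Step 7: continuity and passing to the limit
  have haprojne : aproj A s vstar ≠ 0 :=
    isArnoldiProj_ne_zero hs1 hgoodstar (isArnoldiProj_aproj A s vstar)
  have hTAcont : ContinuousAt (TA A s) vstar := continuousAt_TA hs1 hgoodstar haprojne
  set wstar : EuclideanSpace ℝ (Fin n) := TA A s vstar with hwstar
  have hwconv : Tendsto (fun j => w (φ j)) atTop (𝓝 wstar) := by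
    have := hTAcont.tendsto.comp hconv
    simpa only [Function.comp_def, hw_eq] using this
  have hlbw : ∀ c : Fin s → ℝ,
      σ 0 ≤ ‖mulv (Aᵀ ^ s) wstar - ∑ i : Fin s, c i • mulv (Aᵀ ^ (i : ℕ)) wstar‖ := by
    intro c
    have hfc : Continuous fun x : EuclideanSpace ℝ (Fin n) =>
        ‖mulv (Aᵀ ^ s) x - ∑ i : Fin s, c i • mulv (Aᵀ ^ (i : ℕ)) x‖ := by
      apply Continuous.norm
      exact (continuous_mulv _).sub (continuous_finset_sum _ fun i _ =>
        Continuous.const_smul (continuous_mulv (Aᵀ ^ (i : ℕ))) (c i))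
    have htend := (hfc.tendsto wstar).comp hwconv
    refine ge_of_tendsto htend (Eventually.of_forall fun j => ?_)
    calc σ 0 ≤ σ (φ j) := hmono (Nat.zero_le _)
      _ ≤ τ (φ j) := hστ (φ j)
      _ ≤ _ := arnoldi_min (h3 (φ j)) c
  have hgoodw : Good Aᵀ s wstar := by
    apply good_of_lb hs1
    intro c h0
    have := hlbw c
    rw [h0, norm_zero] at this
    linarith [hσpos 0]
  have haprojwne : aproj Aᵀ s wstar ≠ 0 :=
    isArnoldiProj_ne_zero hs1 hgoodw (isArnoldiProj_aproj Aᵀ s wstar)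
  have hTAcontw : ContinuousAt (TA Aᵀ s) wstar := continuousAt_TA hs1 hgoodw haprojwne
  have hconv2 : Tendsto (fun j => v (φ j + 1)) atTop (𝓝 (TA Aᵀ s wstar)) := by
    have := hTAcontw.tendsto.comp hwconv
    simpa only [Function.comp_def, hv_eq] using this
  have hfix : vstar = TA Aᵀ s wstar := tendsto_nhds_unique hconv1 hconv2
  exact ⟨hfix, hvstar1, grade_of_good hgoodstar⟩
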